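/- Let X be a finite set of cardinality n, let m ≥ 1 divide n, and let F be a nonempty family of m-element subsets of X. Then there exists a partition of X into m parts X_1, …, X_m, each of cardinality n/m, such that the number of U ∈ F with |U ∩ X_i| = 1 for every i ∈ {1, …, m} is at least (n/m)^m · |F| / C(n,m), which in turn is strictly greater than |F| · e^{−m}. -/

import Mathlib

open Function Set

section aux

private noncomputable def bwdPerm {γ δ : Type*} (a b : δ → γ)
    (ha : Injective a) (hb : Injective b)
    (f : ((Set.range a)ᶜ : Set γ) ≃ ((Set.range b)ᶜ : Set γ)) : Equiv.Perm γ := by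
  classical exact ((Equiv.sumCompl (· ∈ Set.range a)).symm.trans
    ((((Equiv.ofInjective a ha).symm.trans (Equiv.ofInjective b hb)).sumCongr f).trans
      (Equiv.sumCompl (· ∈ Set.range b))))

private lemma bwdPerm_apply_mem {γ δ : Type*} (a b : δ → γ)
    (ha : Injective a) (hb : Injective b)
    (f : ((Set.range a)ᶜ : Set γ) ≃ ((Set.range b)ᶜ : Set γ)) (x : δ) :
    bwdPerm a b ha hb f (a x) = b x := by
  classical
  simp only [bwdPerm, Equiv.trans_apply]
  rw [Equiv.sumCompl_symm_apply_of_pos (p := (· ∈ Set.range a)) (a := a x) ⟨x, rfl⟩]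
  erw [Equiv.sumCongr_apply, Sum.map_inl,
    Equiv.trans_apply, Equiv.ofInjective_symm_apply, Equiv.sumCompl_apply_inl,
    Equiv.ofInjective_apply]

private lemma bwdPerm_apply_notMem {γ δ : Type*} (a b : δ → γ)
    (ha : Injective a) (hb : Injective b)
    (f : ((Set.range a)ᶜ : Set γ) ≃ ((Set.range b)ᶜ : Set γ)) (y : γ) (hy : y ∉ Set.range a) :
    bwdPerm a b ha hb f y = (f ⟨y, hy⟩ : γ) := by
  classical
  simp only [bwdPerm, Equiv.trans_apply]
  rw [Equiv.sumCompl_symm_apply_of_neg (p := (· ∈ Set.range a)) hy]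
  erw [Equiv.sumCongr_apply, Sum.map_inr,
    Equiv.sumCompl_apply_inr]

private theorem perm_fiber_card {γ δ : Type*} [Fintype γ] [DecidableEq γ] [Fintype δ]
    (a b : δ → γ) (ha : Function.Injective a) (hb : Function.Injective b) :
    (Finset.univ.filter (fun σ : Equiv.Perm γ => ∀ x, σ (a x) = b x)).card
      = (Fintype.card γ - Fintype.card δ).factorial := by
  classical
  rw [← Fintype.card_subtype]
  have hbij : Function.Bijective
      (fun f : (((Set.range a)ᶜ : Set γ) ≃ ((Set.range b)ᶜ : Set γ)) =>
        (⟨bwdPerm a b ha hb f, fun x => bwdPerm_apply_mem a b ha hb f x⟩ :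
          {σ : Equiv.Perm γ // ∀ x, σ (a x) = b x})) := by
    constructor
    · intro f g hfg
      ext ⟨y, hy⟩
      have := congrArg (fun σ : {σ : Equiv.Perm γ // ∀ x, σ (a x) = b x} => σ.1 y) hfg
      simpa [bwdPerm_apply_notMem a b ha hb _ y hy] using this
    · rintro ⟨σ, hσ⟩
      refine ⟨⟨fun y => ⟨σ y.1, fun ⟨x, hx⟩ => y.2 ⟨x, σ.injective (hx ▸ hσ x)⟩⟩,
        fun z => ⟨σ.symm z.1, fun ⟨x, hx⟩ => z.2 ⟨x, by
          rw [← hσ x, hx, Equiv.apply_symm_apply]⟩⟩,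
        fun y => by ext; simp, fun z => by ext; simp⟩, ?_⟩
      apply Subtype.ext
      ext y
      by_cases hy : y ∈ Set.range a
      · obtain ⟨x, rfl⟩ := hy
        rw [bwdPerm_apply_mem, hσ x]
      · rw [bwdPerm_apply_notMem a b ha hb _ y hy]; rfl
  rw [← Fintype.card_of_bijective hbij]
  have hcc : Fintype.card ((Set.range a)ᶜ : Set γ) = Fintype.card γ - Fintype.card δ := by
    rw [Fintype.card_compl_set, Set.card_range_of_injective ha]
  have hcc' : Fintype.card ((Set.range b)ᶜ : Set γ) = Fintype.card γ - Fintype.card δ := by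
    rw [Fintype.card_compl_set, Set.card_range_of_injective hb]
  rw [Fintype.card_equiv (Fintype.equivOfCardEq (hcc.trans hcc'.symm)), hcc]

private lemma filter_card_one_iff {β : Type*} [Fintype β] (p : β → Prop) [DecidablePred p] :
    (Finset.univ.filter p).card = 1 ↔ ∃! a, p a := by
  rw [Finset.card_eq_one]
  constructor
  · rintro ⟨a, ha⟩
    rw [Finset.eq_singleton_iff_unique_mem] at ha
    exact ⟨a, (Finset.mem_filter.1 ha.1).2, fun b hb =>
      ha.2 b (Finset.mem_filter.2 ⟨Finset.mem_univ _, hb⟩)⟩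
  · rintro ⟨a, ha, hu⟩
    exact ⟨a, Finset.eq_singleton_iff_unique_mem.2
      ⟨Finset.mem_filter.2 ⟨Finset.mem_univ _, ha⟩,
       fun b hb => hu b (Finset.mem_filter.1 hb).2⟩⟩

-- "Good" functions: h : β → Fin n whose block map is a system of distinct block representatives
private lemma good_iff_bijective {β : Type*} [Fintype β] {n m k : ℕ} (hn : n = m * k)
    (hk : 0 < k) (h : β → Fin n) :
    (∀ i : Fin m, (Finset.univ.filter (fun u : β => ((h u : ℕ) / k = (i : ℕ)))).card = 1)
      ↔ Function.Bijective (fun u : β =>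
          (⟨(h u : ℕ) / k, by
            have h2 : (h u : ℕ) < k * m := by rw [Nat.mul_comm, ← hn]; exact (h u).2
            exact Nat.div_lt_of_lt_mul h2⟩ : Fin m)) := by
  classical
  rw [Function.bijective_iff_existsUnique]
  constructor
  · intro H i
    have := (filter_card_one_iff _).1 (H i)
    obtain ⟨a, ha, hu⟩ := this
    exact ⟨a, Fin.ext ha, fun b hb => hu b (by simpa using congrArg Fin.val hb)⟩
  · intro H i
    obtain ⟨a, ha, hu⟩ := H i
    exact (filter_card_one_iff _).2 ⟨a, by simpa using congrArg Fin.val ha,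
      fun b hb => hu b (Fin.ext hb)⟩

private lemma good_injective {β : Type*} [Fintype β] {n m k : ℕ} (hn : n = m * k)
    (hk : 0 < k) (h : β → Fin n)
    (H : ∀ i : Fin m, (Finset.univ.filter (fun u : β => ((h u : ℕ) / k = (i : ℕ)))).card = 1) :
    Function.Injective h := by
  have := ((good_iff_bijective hn hk h).1 H).1
  intro u v huv
  exact this (by simp [huv])

private lemma good_count {β : Type*} [Fintype β] [DecidableEq β] {n m k : ℕ} (hn : n = m * k)
    (hk : 0 < k) (hb : Fintype.card β = m) :
    (Finset.univ.filter (fun h : β → Fin n =>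
      ∀ i : Fin m, (Finset.univ.filter (fun u : β => ((h u : ℕ) / k = (i : ℕ)))).card = 1)).card
      = m.factorial * k ^ m := by
  classical
  rw [← Fintype.card_subtype]
  have key : {h : β → Fin n //
      ∀ i : Fin m, (Finset.univ.filter (fun u : β => ((h u : ℕ) / k = (i : ℕ)))).card = 1}
      ≃ ((β ≃ Fin m) × (β → Fin k)) := by
    refine ⟨fun h => ⟨Equiv.ofBijective _ ((good_iff_bijective hn hk h.1).1 h.2),
        fun u => ⟨(h.1 u : ℕ) % k, Nat.mod_lt _ hk⟩⟩,
      fun p => ⟨fun u => ⟨(p.1 u : ℕ) * k + (p.2 u : ℕ), by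
          rw [hn]
          calc ((p.1 u : ℕ)) * k + (p.2 u : ℕ) < ((p.1 u : ℕ)) * k + k := by
                exact Nat.add_lt_add_left (p.2 u).2 _
            _ = ((p.1 u : ℕ) + 1) * k := by ring
            _ ≤ m * k := Nat.mul_le_mul_right _ (p.1 u).2⟩, by
        intro i
        have hdiv : ∀ u : β, (((p.1 u : ℕ) * k + (p.2 u : ℕ)) / k) = (p.1 u : ℕ) := by
          intro u
          rw [Nat.mul_comm, Nat.mul_add_div hk, Nat.div_eq_of_lt (p.2 u).2, Nat.add_zero]
        simp only [hdiv]
        rw [filter_card_one_iff]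
        refine ⟨p.1.symm i, by simp, fun u hu => ?_⟩
        have : p.1 u = i := Fin.ext hu
        rw [← this, Equiv.symm_apply_apply]⟩, ?_, ?_⟩
    · intro h
      apply Subtype.ext
      funext u
      apply Fin.ext
      exact Nat.div_add_mod' _ _
    · intro p
      have hdiv : ∀ u : β, (((p.1 u : ℕ) * k + (p.2 u : ℕ)) / k) = (p.1 u : ℕ) := by
        intro u
        rw [Nat.mul_comm, Nat.mul_add_div hk, Nat.div_eq_of_lt (p.2 u).2, Nat.add_zero]
      refine Prod.ext ?_ ?_
      · apply Equiv.ext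
        intro u
        apply Fin.ext
        simpa using hdiv u
      · funext u
        apply Fin.ext
        simp only []
        rw [Nat.mul_comm, Nat.mul_add_mod, Nat.mod_eq_of_lt (p.2 u).2]
  rw [Fintype.card_congr key, Fintype.card_prod, Fintype.card_fun,
    Fintype.card_equiv (Fintype.equivFinOfCardEq hb), hb, Fintype.card_fin]

end aux

section aux2
open Finset

private lemma transversal_perm_count {β : Type*} [Fintype β] [DecidableEq β]
    {n m k : ℕ} (hn : n = m * k) (hk : 0 < k) (hb : Fintype.card β = m)
    (b : β → Fin n) (hbinj : Injective b) :
    (Finset.univ.filter (fun σ : Equiv.Perm (Fin n) =>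
      ∀ i : Fin m,
        (Finset.univ.filter (fun u : β => ((σ.symm (b u) : ℕ) / k = (i : ℕ)))).card = 1)).card
      = m.factorial * k ^ m * (n - m).factorial := by
  classical
  have hmain := Finset.card_eq_sum_card_fiberwise
    (s := Finset.univ.filter (fun σ : Equiv.Perm (Fin n) =>
      ∀ i : Fin m,
        (Finset.univ.filter (fun u : β => ((σ.symm (b u) : ℕ) / k = (i : ℕ)))).card = 1))
    (t := Finset.univ.filter (fun h : β → Fin n =>
      ∀ i : Fin m, (Finset.univ.filter (fun u : β => ((h u : ℕ) / k = (i : ℕ)))).card = 1))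
    (f := fun σ u => σ.symm (b u))
    (by intro σ hσ
        simp only [Finset.mem_coe, Finset.mem_filter, Finset.mem_univ, true_and] at hσ ⊢
        exact hσ)
  rw [hmain]
  have hfib : ∀ h ∈ Finset.univ.filter (fun h : β → Fin n =>
      ∀ i : Fin m, (Finset.univ.filter (fun u : β => ((h u : ℕ) / k = (i : ℕ)))).card = 1),
      ((Finset.univ.filter (fun σ : Equiv.Perm (Fin n) =>
        ∀ i : Fin m,
          (Finset.univ.filter (fun u : β => ((σ.symm (b u) : ℕ) / k = (i : ℕ)))).card = 1)).filter
        (fun σ => (fun u => σ.symm (b u)) = h)).card = (n - m).factorial := by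
    intro h hh
    simp only [Finset.mem_filter, Finset.mem_univ, true_and] at hh
    have hstep : ((Finset.univ.filter (fun σ : Equiv.Perm (Fin n) =>
        ∀ i : Fin m,
          (Finset.univ.filter (fun u : β => ((σ.symm (b u) : ℕ) / k = (i : ℕ)))).card = 1)).filter
        (fun σ => (fun u => σ.symm (b u)) = h))
        = Finset.univ.filter (fun σ : Equiv.Perm (Fin n) => ∀ u, σ (h u) = b u) := by
      ext σ
      simp only [Finset.filter_filter, Finset.mem_filter, Finset.mem_univ, true_and]
      constructor
      · rintro ⟨-, hfun⟩
        intro u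
        have := congrFun hfun u
        rw [← this, Equiv.apply_symm_apply]
      · intro hfun
        have hfun' : (fun u => σ.symm (b u)) = h := by
          funext u
          rw [← hfun u, Equiv.symm_apply_apply]
        refine ⟨?_, hfun'⟩
        subst hfun'
        intro i
        simpa using hh i
    rw [hstep, perm_fiber_card h b (good_injective hn hk h hh) hbinj, Fintype.card_fin, hb]
  rw [Finset.sum_congr rfl hfib, Finset.sum_const, good_count hn hk hb, smul_eq_mul]

private def splitOf {α : Type*} [DecidableEq α] (X : Finset α) {n : ℕ} (k : ℕ)
    (e : ↥X ≃ Fin n) (σ : Equiv.Perm (Fin n)) (i : ℕ) : Finset α :=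
  (Finset.univ.filter (fun j : Fin n => (j : ℕ) / k = i)).image (fun j => ((e.symm (σ j)) : α))

private lemma mem_splitOf {α : Type*} [DecidableEq α] {X : Finset α} {n : ℕ} {k : ℕ}
    {e : ↥X ≃ Fin n} {σ : Equiv.Perm (Fin n)} {i : ℕ} {x : α} :
    x ∈ splitOf X k e σ i ↔ ∃ hx : x ∈ X, ((σ.symm (e ⟨x, hx⟩) : ℕ) / k = i) := by
  simp only [splitOf, Finset.mem_image, Finset.mem_filter, Finset.mem_univ, true_and]
  constructor
  · rintro ⟨j, hj, rfl⟩
    refine ⟨(e.symm (σ j)).2, ?_⟩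
    have h1 : (⟨((e.symm (σ j)) : α), (e.symm (σ j)).2⟩ : ↥X) = e.symm (σ j) := rfl
    rw [h1, Equiv.apply_symm_apply, Equiv.symm_apply_apply]
    exact hj
  · rintro ⟨hx, hi⟩
    exact ⟨σ.symm (e ⟨x, hx⟩), by simpa using hi, by simp⟩

private lemma splitOf_inj {α : Type*} [DecidableEq α] {X : Finset α} {n : ℕ}
    (e : ↥X ≃ Fin n) (σ : Equiv.Perm (Fin n)) :
    Injective (fun j => ((e.symm (σ j)) : α)) := by
  intro j1 j2 hj
  exact σ.injective (e.symm.injective (Subtype.coe_injective hj))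

private lemma splitOf_card {α : Type*} [DecidableEq α] (X : Finset α) {n m k : ℕ}
    (hn : n = m * k) (hk : 0 < k) (e : ↥X ≃ Fin n) (σ : Equiv.Perm (Fin n)) {i : ℕ}
    (hi : i < m) : (splitOf X k e σ i).card = k := by
  rw [splitOf, Finset.card_image_of_injective _ (splitOf_inj e σ)]
  have := Finset.card_bij'
    (s := Finset.univ.filter (fun j : Fin n => (j : ℕ) / k = i)) (t := (Finset.univ : Finset (Fin k)))
    (i := fun j _ => (⟨(j : ℕ) % k, Nat.mod_lt _ hk⟩ : Fin k))
    (j := fun t _ => (⟨i * k + (t : ℕ), by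
      rw [hn]
      calc i * k + (t : ℕ) < i * k + k := Nat.add_lt_add_left t.2 _
        _ = (i + 1) * k := by ring
        _ ≤ m * k := Nat.mul_le_mul_right _ hi⟩ : Fin n))
    (by intro a ha; exact Finset.mem_univ _)
    (by intro t ht
        simp only [Finset.mem_filter, Finset.mem_univ, true_and]
        rw [Nat.mul_comm, Nat.mul_add_div hk, Nat.div_eq_of_lt t.2, Nat.add_zero])
    (by intro a ha
        simp only [Finset.mem_filter, Finset.mem_univ, true_and] at ha
        apply Fin.ext
        simp only []
        rw [← ha, Nat.div_add_mod' ])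
    (by intro t ht
        apply Fin.ext
        simp only []
        rw [Nat.mul_comm, Nat.mul_add_mod, Nat.mod_eq_of_lt t.2])
  rw [this, Finset.card_univ, Fintype.card_fin]

private lemma splitOf_disjoint {α : Type*} [DecidableEq α] {X : Finset α} {n k : ℕ}
    (e : ↥X ≃ Fin n) (σ : Equiv.Perm (Fin n)) {i j : ℕ} (hij : i ≠ j) :
    Disjoint (splitOf X k e σ i) (splitOf X k e σ j) := by
  rw [Finset.disjoint_left]
  rintro x hxi hxj
  obtain ⟨hx, h1⟩ := mem_splitOf.1 hxi
  obtain ⟨hx', h2⟩ := mem_splitOf.1 hxj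
  exact hij (h1.symm.trans h2)

private lemma splitOf_biUnion {α : Type*} [DecidableEq α] (X : Finset α) {n m k : ℕ}
    (hn : n = m * k) (hk : 0 < k) (e : ↥X ≃ Fin n) (σ : Equiv.Perm (Fin n)) :
    Finset.univ.biUnion (fun i : Fin m => splitOf X k e σ (i : ℕ)) = X := by
  ext x
  simp only [Finset.mem_biUnion, Finset.mem_univ, true_and]
  constructor
  · rintro ⟨i, hi⟩
    obtain ⟨hx, -⟩ := mem_splitOf.1 hi
    exact hx
  · intro hx
    have h2 : ((σ.symm (e ⟨x, hx⟩)) : ℕ) < k * m := by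
      rw [Nat.mul_comm, ← hn]; exact (σ.symm (e ⟨x, hx⟩)).2
    exact ⟨⟨_, Nat.div_lt_of_lt_mul h2⟩, mem_splitOf.2 ⟨hx, rfl⟩⟩

private lemma inter_splitOf_card {α : Type*} [DecidableEq α] {X U : Finset α} (hU : U ⊆ X)
    {n k : ℕ} (e : ↥X ≃ Fin n) (σ : Equiv.Perm (Fin n)) (i : ℕ) :
    (U ∩ splitOf X k e σ i).card
      = (Finset.univ.filter
          (fun u : ↥U => ((σ.symm (e ⟨u.1, hU u.2⟩) : ℕ) / k = i))).card := by
  classical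
  have himg : U ∩ splitOf X k e σ i
      = (Finset.univ.filter
          (fun u : ↥U => ((σ.symm (e ⟨u.1, hU u.2⟩) : ℕ) / k = i))).image
          Subtype.val := by
    ext x
    constructor
    · intro hx
      obtain ⟨hxU, hxS⟩ := Finset.mem_inter.1 hx
      obtain ⟨hxX, hi⟩ := mem_splitOf.1 hxS
      refine Finset.mem_image.2 ⟨⟨x, hxU⟩, ?_, rfl⟩
      exact Finset.mem_filter.2 ⟨Finset.mem_univ _, hi⟩
    · intro hx
      obtain ⟨u, hu, rfl⟩ := Finset.mem_image.1 hx
      have hu' := (Finset.mem_filter.1 hu).2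
      exact Finset.mem_inter.2 ⟨u.2, mem_splitOf.2 ⟨hU u.2, hu'⟩⟩
  rw [himg, Finset.card_image_of_injective _ Subtype.coe_injective]

end aux2

theorem statement_2 {α : Type*} [DecidableEq α] (X : Finset α) (n m : ℕ)
    (hn : X.card = n) (hm : 1 ≤ m) (hdvd : m ∣ n)
    (F : Finset (Finset α)) (hF : F ⊆ X.powersetCard m) (hne : F.Nonempty) :
    ∃ Xs : Fin m → Finset α,
      (∀ i j, i ≠ j → Disjoint (Xs i) (Xs j)) ∧
      Finset.univ.biUnion Xs = X ∧
      (∀ i, (Xs i).card = n / m) ∧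
      (((n / m : ℕ) : ℝ) ^ m * F.card / (n.choose m) ≤
        ((F.filter (fun U => ∀ i, (U ∩ Xs i).card = 1)).card : ℝ)) ∧
      (F.card : ℝ) * Real.exp (-(m : ℝ)) <
        ((n / m : ℕ) : ℝ) ^ m * F.card / (n.choose m) := by
  classical
  obtain ⟨U0, hU0⟩ := hne
  obtain ⟨hU0X, hU0m⟩ := Finset.mem_powersetCard.1 (hF hU0)
  have hmn : m ≤ n := by
    calc m = U0.card := hU0m.symm
      _ ≤ X.card := Finset.card_le_card hU0X
      _ = n := hn
  set k := n / m with hkdef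
  have hn' : n = m * k := (Nat.mul_div_cancel' hdvd).symm
  have hk : 0 < k := by
    rcases Nat.eq_zero_or_pos k with h | h
    · exfalso; rw [h, Nat.mul_zero] at hn'; omega
    · exact h
  have e : ↥X ≃ Fin n := Fintype.equivFinOfCardEq (by rw [Fintype.card_coe, hn])
  -- per-U permutation count
  have hcount : ∀ U ∈ F, (Finset.univ.filter (fun σ : Equiv.Perm (Fin n) =>
      ∀ i : Fin m, (U ∩ splitOf X k e σ (i : ℕ)).card = 1)).card
      = m.factorial * k ^ m * (n - m).factorial := by
    intro U hU
    obtain ⟨hUX, hUm⟩ := Finset.mem_powersetCard.1 (hF hU)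
    have hbcard : Fintype.card ↥U = m := by rw [Fintype.card_coe, hUm]
    have hbinj : Injective (fun u : ↥U => e ⟨u.1, hUX u.2⟩) := by
      intro u v huv
      have h := congrArg Subtype.val (e.injective huv); exact Subtype.ext h
    rw [← transversal_perm_count hn' hk hbcard (fun u : ↥U => e ⟨u.1, hUX u.2⟩) hbinj]
    congr 1
    apply Finset.filter_congr
    intro σ _
    simp only [inter_splitOf_card hUX e σ]
  -- total over all permutations
  have htotal : ∑ σ : Equiv.Perm (Fin n),
      ((F.filter (fun U => ∀ i : Fin m, (U ∩ splitOf X k e σ (i : ℕ)).card = 1)).card)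
      = F.card * (m.factorial * k ^ m * (n - m).factorial) := by
    have h1 : ∀ σ : Equiv.Perm (Fin n),
        (F.filter (fun U => ∀ i : Fin m, (U ∩ splitOf X k e σ (i : ℕ)).card = 1)).card
        = ∑ U ∈ F, if (∀ i : Fin m, (U ∩ splitOf X k e σ (i : ℕ)).card = 1) then 1 else 0 :=
      fun σ => Finset.card_filter _ _
    simp only [h1]
    rw [Finset.sum_comm]
    have h2 : ∀ U ∈ F, (∑ σ : Equiv.Perm (Fin n),
        if (∀ i : Fin m, (U ∩ splitOf X k e σ (i : ℕ)).card = 1) then 1 else 0)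
        = m.factorial * k ^ m * (n - m).factorial := by
      intro U hU
      rw [← Finset.card_filter]
      exact hcount U hU
    rw [Finset.sum_congr rfl h2, Finset.sum_const, smul_eq_mul]
  -- averaging
  have hCpos : 0 < n.choose m := Nat.choose_pos hmn
  have hCposR : (0 : ℝ) < (n.choose m : ℝ) := by exact_mod_cast hCpos
  have hfacR : (n.factorial : ℝ)
      = (n.choose m : ℝ) * ((m.factorial : ℝ) * ((n - m).factorial : ℝ)) := by
    have := Nat.choose_mul_factorial_mul_factorial hmn
    push_cast [← this]
    ring
  obtain ⟨σ, -, hσ⟩ := Finset.exists_le_of_sum_le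
    (s := (Finset.univ : Finset (Equiv.Perm (Fin n))))
    (f := fun _ => ((k : ℝ)) ^ m * (F.card : ℝ) / (n.choose m : ℝ))
    (g := fun σ => ((F.filter
      (fun U => ∀ i : Fin m, (U ∩ splitOf X k e σ (i : ℕ)).card = 1)).card : ℝ))
    Finset.univ_nonempty
    (by
      rw [Finset.sum_const, nsmul_eq_mul, Finset.card_univ, Fintype.card_perm, Fintype.card_fin]
      have hcast : (∑ σ : Equiv.Perm (Fin n),
          ((F.filter (fun U => ∀ i : Fin m, (U ∩ splitOf X k e σ (i : ℕ)).card = 1)).card : ℝ))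
          = (F.card : ℝ) * ((m.factorial : ℝ) * (k : ℝ) ^ m * ((n - m).factorial : ℝ)) := by
        rw [← Nat.cast_sum]
        rw [htotal]
        push_cast
        ring
      rw [hcast, hfacR]
      apply le_of_eq
      rw [mul_div_assoc', div_eq_iff hCposR.ne']
      ring)
  refine ⟨fun i => splitOf X k e σ (i : ℕ), ?_, ?_, ?_, ?_, ?_⟩
  · intro i j hij
    exact splitOf_disjoint e σ (fun h => hij (Fin.ext h))
  · exact splitOf_biUnion X hn' hk e σ
  · intro i
    exact splitOf_card X hn' hk e σ i.2
  · exact hσ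
  · -- analytic inequality
    have hFpos : (0 : ℝ) < (F.card : ℝ) := by
      have : 0 < F.card := Finset.card_pos.2 ⟨U0, hU0⟩
      exact_mod_cast this
    have hmR : (0 : ℝ) < (m : ℝ) := by exact_mod_cast hm
    have hexp : ((m : ℝ)) ^ m / (m.factorial : ℝ) < Real.exp (m : ℝ) := by
      have hsum := Real.sum_le_exp_of_nonneg (x := (m : ℝ)) hmR.le (m + 2)
      rw [Finset.sum_range_succ, Finset.sum_range_succ] at hsum
      have hpos : (0 : ℝ) < (m : ℝ) ^ (m + 1) / ((m + 1).factorial : ℝ) := by positivity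
      have hnn : (0 : ℝ) ≤ ∑ i ∈ Finset.range m, (m : ℝ) ^ i / (i.factorial : ℝ) :=
        Finset.sum_nonneg fun i _ => by positivity
      linarith
    have hkR : (0 : ℝ) < (k : ℝ) := by exact_mod_cast hk
    have hC_lt : (n.choose m : ℝ) < (k : ℝ) ^ m * Real.exp (m : ℝ) := by
      have h1 : (n.choose m : ℝ) ≤ (n : ℝ) ^ m / (m.factorial : ℝ) := Nat.choose_le_pow_div m n
      have h2 : (n : ℝ) ^ m = (m : ℝ) ^ m * (k : ℝ) ^ m := by
        rw [hn']; push_cast; ring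
      calc (n.choose m : ℝ) ≤ (n : ℝ) ^ m / (m.factorial : ℝ) := h1
        _ = (k : ℝ) ^ m * ((m : ℝ) ^ m / (m.factorial : ℝ)) := by rw [h2]; ring
        _ < (k : ℝ) ^ m * Real.exp (m : ℝ) := by
            exact mul_lt_mul_of_pos_left hexp (by positivity)
    rw [Real.exp_neg, lt_div_iff₀ hCposR]
    have e1 : (F.card : ℝ) * (Real.exp (m : ℝ))⁻¹ * (n.choose m : ℝ)
        < (F.card : ℝ) * (Real.exp (m : ℝ))⁻¹ * ((k : ℝ) ^ m * Real.exp (m : ℝ)) :=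
      mul_lt_mul_of_pos_left hC_lt (mul_pos hFpos (inv_pos.2 (Real.exp_pos _)))
    have e2 : (F.card : ℝ) * (Real.exp (m : ℝ))⁻¹ * ((k : ℝ) ^ m * Real.exp (m : ℝ))
        = (k : ℝ) ^ m * (F.card : ℝ) := by
      rw [mul_comm ((k : ℝ) ^ m), ← mul_assoc, mul_assoc (F.card : ℝ),
        inv_mul_cancel₀ (Real.exp_pos _).ne', mul_one]
      ring
    linarith
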